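/- Consider a GRU cell with update rule r_t = σ(W_ir x_t + b_ir + W_hr h_{t-1} + b_hr), z_t = σ(W_iz x_t + b_iz + W_hz h_{t-1} + b_hz), n_t = tanh(W_in x_t + b_in + r_t ⊙ (W_hn h_{t-1} + b_hn)), h_t = (1 − z_t) ⊙ n_t + z_t ⊙ h_{t-1}, where every weight matrix has block-symmetric form [[A, B], [B, A]] and every bias has doubled form [a; a]. Then the one-step update F_GRU satisfies F_GRU(M_c x_t, M_c h_{t-1}) = M_c F_GRU(x_t, h_{t-1}). -/
import Mathlib


/-- Block-symmetric matrix `[[A, B], [B, A]]`. -/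
def ssrBlock {m n : ℕ} (A B : Matrix (Fin m) (Fin n) ℝ) :
    Matrix (Fin m ⊕ Fin m) (Fin n ⊕ Fin n) ℝ :=
  Matrix.fromBlocks A B B A

/-- Doubled bias `[a; a]`. -/
def ssrDbl {m : ℕ} (a : Fin m → ℝ) : Fin m ⊕ Fin m → ℝ := Sum.elim a a

/-- One GRU step with block-symmetric weights and doubled biases. -/
noncomputable def gruStep {Cin Ch : ℕ} (σ : ℝ → ℝ)
    (Air Bir Aiz Biz Ain Bin : Matrix (Fin Ch) (Fin Cin) ℝ)
    (Ahr Bhr Ahz Bhz Ahn Bhn : Matrix (Fin Ch) (Fin Ch) ℝ)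
    (air ahr aiz ahz ain ahn : Fin Ch → ℝ)
    (x : Fin Cin ⊕ Fin Cin → ℝ) (h : Fin Ch ⊕ Fin Ch → ℝ) :
    Fin Ch ⊕ Fin Ch → ℝ :=
  let r : Fin Ch ⊕ Fin Ch → ℝ := fun i =>
    σ (((ssrBlock Air Bir).mulVec x + ssrDbl air
        + (ssrBlock Ahr Bhr).mulVec h + ssrDbl ahr) i)
  let z : Fin Ch ⊕ Fin Ch → ℝ := fun i =>
    σ (((ssrBlock Aiz Biz).mulVec x + ssrDbl aiz
        + (ssrBlock Ahz Bhz).mulVec h + ssrDbl ahz) i)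
  let n : Fin Ch ⊕ Fin Ch → ℝ := fun i =>
    Real.tanh (((ssrBlock Ain Bin).mulVec x + ssrDbl ain) i
        + r i * (((ssrBlock Ahn Bhn).mulVec h + ssrDbl ahn) i))
  fun i => (1 - z i) * n i + z i * h i


lemma ssrBlock_mulVec_swap {m n : ℕ} (A B : Matrix (Fin m) (Fin n) ℝ)
    (x : Fin n ⊕ Fin n → ℝ) (i : Fin m ⊕ Fin m) :
    (ssrBlock A B).mulVec (x ∘ Sum.swap) i
      = (ssrBlock A B).mulVec x (Sum.swap i) := by
  cases i <;>
    simp [ssrBlock, Matrix.mulVec, Matrix.fromBlocks, dotProduct,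
      Fintype.sum_sum_type, add_comm]

lemma ssrDbl_swap {m : ℕ} (a : Fin m → ℝ) (i : Fin m ⊕ Fin m) :
    ssrDbl a (Sum.swap i) = ssrDbl a i := by
  cases i <;> rfl

/-- A GRU cell whose weight matrices are block-symmetric
`[[A, B], [B, A]]` and whose biases are doubled `[a; a]` is equivariant under
the channel-exchange operator: `F(M_c x, M_c h) = M_c F(x, h)`. -/
theorem gruStep_channelExchange_equivariant
    (Cin Ch : ℕ) (σ : ℝ → ℝ)
    (Air Bir Aiz Biz Ain Bin : Matrix (Fin Ch) (Fin Cin) ℝ)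
    (Ahr Bhr Ahz Bhz Ahn Bhn : Matrix (Fin Ch) (Fin Ch) ℝ)
    (air ahr aiz ahz ain ahn : Fin Ch → ℝ)
    (x : Fin Cin ⊕ Fin Cin → ℝ) (h : Fin Ch ⊕ Fin Ch → ℝ) :
    gruStep σ Air Bir Aiz Biz Ain Bin Ahr Bhr Ahz Bhz Ahn Bhn
        air ahr aiz ahz ain ahn (x ∘ Sum.swap) (h ∘ Sum.swap)
      = (gruStep σ Air Bir Aiz Biz Ain Bin Ahr Bhr Ahz Bhz Ahn Bhn
          air ahr aiz ahz ain ahn x h) ∘ Sum.swap := by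
  funext i
  simp only [gruStep, Function.comp, Pi.add_apply,
    ssrBlock_mulVec_swap, ssrDbl_swap]
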